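/- Let F_θ(x) = (1/2)(1 - tanh(θ)·tanh(xθ/2)) for θ > 0. Then for all real a ≥ b ≥ 0, F_θ(a) + F_θ(-b) ≥ F_θ(a-b) + F_θ(0). -/
import Mathlib

lemma tanh_eq2 (x : ℝ) : Real.tanh x = (Real.exp (2*x) - 1)/(Real.exp (2*x) + 1) := by
  rw [Real.tanh_eq_sinh_div_cosh, Real.sinh_eq, Real.cosh_eq]
  have h : Real.exp x ≠ 0 := Real.exp_ne_zero x
  have h2 : Real.exp (2*x) + 1 ≠ 0 := by positivity
  rw [show (2:ℝ)*x = x + x by ring, Real.exp_add] at *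
  rw [Real.exp_neg]
  field_simp

lemma tanh_sub_le (x y : ℝ) (hy : 0 ≤ y) (hxy : y ≤ x) :
    Real.tanh x - Real.tanh y ≤ Real.tanh (x - y) := by
  rw [tanh_eq2, tanh_eq2, tanh_eq2]
  set A := Real.exp (2*x) with hA
  set B := Real.exp (2*y) with hB
  have hAB : Real.exp (2*(x-y)) = A / B := by
    rw [hA, hB, ← Real.exp_sub]; ring_nf
  rw [hAB]
  have hB0 : 0 < B := Real.exp_pos _
  have hA0 : 0 < A := Real.exp_pos _
  have hB1 : 1 ≤ B := by rw [hB]; exact Real.one_le_exp (by linarith)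
  have hBA : B ≤ A := by rw [hA, hB]; exact Real.exp_le_exp.2 (by linarith)
  have key : (A - B)/B/((A+B)/B) = (A-B)/(A+B) := by
    field_simp
  rw [div_add_one (by positivity), div_sub_one (by positivity), key]
  rw [div_sub_div _ _ (by positivity) (by positivity), div_le_div_iff₀ (by positivity) (by positivity)]
  nlinarith [mul_nonneg (sub_nonneg.2 hB1) (sub_nonneg.2 hBA), mul_pos hA0 hB0]

/-- `F_θ(x) = (1/2)(1 - tanh(θ)·tanh(xθ/2))`. -/
noncomputable def Ftheta (θ x : ℝ) : ℝ :=
  (1 / 2) * (1 - Real.tanh θ * Real.tanh (x * θ / 2))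

theorem stmt_0 (θ : ℝ) (hθ : 0 < θ) (a b : ℝ) (hb : 0 ≤ b) (hab : b ≤ a) :
    Ftheta θ a + Ftheta θ (-b) ≥ Ftheta θ (a - b) + Ftheta θ 0 := by
  have hT : 0 ≤ Real.tanh θ := by
    rw [tanh_eq2]
    have h1 : (1:ℝ) ≤ Real.exp (2*θ) := Real.one_le_exp (by linarith)
    have h2 : (0:ℝ) < Real.exp (2*θ) + 1 := by positivity
    exact div_nonneg (by linarith) h2.le
  have key := tanh_sub_le (a*θ/2) (b*θ/2) (by positivity) (by nlinarith)
  unfold Ftheta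
  rw [show (a-b)*θ/2 = a*θ/2 - b*θ/2 by ring, show (-b)*θ/2 = -(b*θ/2) by ring,
    Real.tanh_neg, show (0:ℝ)*θ/2 = 0 by ring, Real.tanh_zero]
  nlinarith [mul_le_mul_of_nonneg_left key hT]
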